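/- Let u be harmonic on a domain containing concentric balls B_{ρ}(y), B_{3ρ}(y), B_{4ρ}(y). If ∫_{B_{ρ}} u² ≤ A^τ E^{2(1-τ)} with ∫_{B_{4ρ}} u² ≤ E², where 0 < τ < 1 is the three-spheres exponent, then iterating along a chain of s balls y₀,…,y_s with B_{ρ}(y_{i}) ⊂ B_{3ρ}(y_{i+1}) yields ∫_{B_{ρ}(y₀)} u² ≤ (∫_{B_{ρ}(y_s)} u²)^{τ^s} · E^{2(1-τ^s)}. -/
import Mathlib


open MeasureTheory Metric

theorem three_spheres_iteration {n : ℕ}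
    (u : EuclideanSpace ℝ (Fin n) → ℝ) (Ω : Set (EuclideanSpace ℝ (Fin n)))
    (hΩ : IsOpen Ω) (ρ E τ : ℝ) (hρ : 0 < ρ) (hE : 0 < E)
    (hτ0 : 0 < τ) (hτ1 : τ < 1)
    (s : ℕ) (y : ℕ → EuclideanSpace ℝ (Fin n))
    (hballs : ∀ i ≤ s, ball (y i) (4 * ρ) ⊆ Ω)
    (hsmooth : ContDiffOn ℝ 2 u Ω)
    (hharm : ∀ x ∈ Ω,
      ∑ i : Fin n, iteratedFDeriv ℝ 2 u x (fun _ => EuclideanSpace.single i (1 : ℝ)) = 0)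
    (h3s : ∀ i ≤ s,
      (∫ x in ball (y i) (3 * ρ), (u x) ^ 2) ≤
        (∫ x in ball (y i) ρ, (u x) ^ 2) ^ τ *
          (∫ x in ball (y i) (4 * ρ), (u x) ^ 2) ^ (1 - τ))
    (hchain : ∀ i < s, ball (y i) ρ ⊆ ball (y (i + 1)) (3 * ρ))
    (hEbound : ∀ i ≤ s, (∫ x in ball (y i) (4 * ρ), (u x) ^ 2) ≤ E ^ 2) :
    (∫ x in ball (y 0) ρ, (u x) ^ 2) ≤
      (∫ x in ball (y s) ρ, (u x) ^ 2) ^ (τ ^ s) * E ^ (2 * (1 - τ ^ s)) := by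
  have hcont : ContinuousOn u Ω := hsmooth.continuousOn
  have hInonneg : ∀ (z : EuclideanSpace ℝ (Fin n)) (r : ℝ),
      0 ≤ ∫ x in ball z r, (u x) ^ 2 := fun z r =>
    setIntegral_nonneg measurableSet_ball (fun x _ => sq_nonneg _)
  have key : ∀ k, k ≤ s →
      (∫ x in ball (y 0) ρ, (u x) ^ 2) ≤
        (∫ x in ball (y k) ρ, (u x) ^ 2) ^ (τ ^ k) * E ^ (2 * (1 - τ ^ k)) := by
    intro k
    induction k with
    | zero =>
      intro _
      simp [Real.rpow_one]
    | succ k ih =>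
      intro hks
      have hk : k ≤ s := Nat.le_of_succ_le hks
      have h1 := ih hk
      have hint : IntegrableOn (fun x => (u x) ^ 2) (ball (y (k + 1)) (3 * ρ)) := by
        have hsub : closedBall (y (k + 1)) (3 * ρ) ⊆ Ω :=
          (closedBall_subset_ball (by linarith)).trans (hballs (k + 1) hks)
        have h2 := ((hcont.mono hsub).pow 2).integrableOn_compact (μ := volume)
          (isCompact_closedBall _ _)
        exact h2.mono_set ball_subset_closedBall
      have h2 : (∫ x in ball (y k) ρ, (u x) ^ 2) ≤
          ∫ x in ball (y (k + 1)) (3 * ρ), (u x) ^ 2 :=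
        setIntegral_mono_set hint
          (Filter.Eventually.of_forall fun x => sq_nonneg _)
          (HasSubset.Subset.eventuallyLE (hchain k hks))
      have h3 := h3s (k + 1) hks
      have hE4 : (∫ x in ball (y (k + 1)) (4 * ρ), (u x) ^ 2) ^ (1 - τ) ≤
          (E ^ 2 : ℝ) ^ (1 - τ) :=
        Real.rpow_le_rpow (hInonneg _ _) (hEbound (k + 1) hks) (by linarith)
      have h4 : (∫ x in ball (y k) ρ, (u x) ^ 2) ≤
          (∫ x in ball (y (k + 1)) ρ, (u x) ^ 2) ^ τ * (E ^ 2 : ℝ) ^ (1 - τ) := by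
        refine h2.trans (h3.trans ?_)
        exact mul_le_mul_of_nonneg_left hE4 (Real.rpow_nonneg (hInonneg _ _) _)
      have hτk : (0:ℝ) ≤ τ ^ k := pow_nonneg hτ0.le k
      have h5 : (∫ x in ball (y k) ρ, (u x) ^ 2) ^ (τ ^ k) ≤
          ((∫ x in ball (y (k + 1)) ρ, (u x) ^ 2) ^ τ * (E ^ 2 : ℝ) ^ (1 - τ)) ^ (τ ^ k) :=
        Real.rpow_le_rpow (hInonneg _ _) h4 hτk
      have h6 : (∫ x in ball (y 0) ρ, (u x) ^ 2) ≤
          ((∫ x in ball (y (k + 1)) ρ, (u x) ^ 2) ^ τ * (E ^ 2 : ℝ) ^ (1 - τ)) ^ (τ ^ k)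
            * E ^ (2 * (1 - τ ^ k)) :=
        h1.trans (mul_le_mul_of_nonneg_right h5 (Real.rpow_nonneg hE.le _))
      refine h6.trans (le_of_eq ?_)
      have hIp : (0:ℝ) ≤ ∫ x in ball (y (k + 1)) ρ, (u x) ^ 2 := hInonneg _ _
      have hE2 : (E:ℝ) ^ 2 = E ^ (2:ℝ) := by
        rw [← Real.rpow_natCast E 2]; norm_num
      rw [Real.mul_rpow (Real.rpow_nonneg hIp _) (Real.rpow_nonneg (by positivity) _),
        ← Real.rpow_natCast _ (k + 1), ← Real.rpow_mul hIp, hE2,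
        ← Real.rpow_mul hE.le, ← Real.rpow_mul hE.le, mul_assoc,
        ← Real.rpow_add hE]
      rw [Real.rpow_natCast]
      ring_nf
  exact key s le_rfl
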